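/- arXiv:2010.04008 — 4 statements merged into one kernel-verified Lean document; each statement's English description precedes it below -/
import Mathlib

section
/- Let n ≥ 1, let A ∈ 𝒮_n (all complex eigenvalues of A lie in the open unit disk and, in particular, are nonzero), and let k ∈ ℕ_{≥1}. If ν(A,A) < k+1 and (A,A) is k-nonresonant, then (A,A) is ∞-nonresonant. -/
noncomputable section
open Matrix Polynomial

/-- `eig` lists the complex eigenvalues of the real matrix `A` with algebraic multiplicity,
i.e. the characteristic polynomial of the complexification of `A` factors as
`∏ i, (X - eig i)`. -/
def IsEigList {n : ℕ} (A : Matrix (Fin n) (Fin n) ℝ) (eig : Fin n → ℂ) : Prop :=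
  (A.map Complex.ofReal).charpoly = ∏ i, (X - C (eig i))

/-- If `A` has nonzero eigenvalues in the open unit disk, the spectral spread
`ν(A,A) = max_{i,j} ln|λ_i| / ln|λ_j|` is `< k + 1`, and `(A,A)` is `k`-nonresonant,
then `(A,A)` is `∞`-nonresonant. -/
theorem infty_nonresonant_of_k_nonresonant
    (n : ℕ) (hn : 1 ≤ n) (A : Matrix (Fin n) (Fin n) ℝ)
    (eig : Fin n → ℂ) (heig : IsEigList A eig)
    (hstable : ∀ i, eig i ≠ 0 ∧ ‖eig i‖ < 1)
    (k : ℕ) (hk : 1 ≤ k)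
    (hspread : ∀ i j,
      Real.log (‖eig i‖) / Real.log (‖eig j‖) < (k : ℝ) + 1)
    (hres : ∀ (i : Fin n) (m : Fin n → ℕ), 2 ≤ ∑ j, m j → ∑ j, m j ≤ k →
      eig i ≠ ∏ j, eig j ^ m j) :
    ∀ (i : Fin n) (m : Fin n → ℕ), 2 ≤ ∑ j, m j → eig i ≠ ∏ j, eig j ^ m j := by
  intro i m h2
  by_cases hle : ∑ j, m j ≤ k
  · exact hres i m h2 hle
  push_neg at hle
  -- now k + 1 ≤ ∑ m j
  have hS : (k : ℝ) + 1 ≤ (∑ j, m j : ℕ) := by exact_mod_cast hle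
  set f : Fin n → ℝ := fun j => Real.log (‖eig j‖) with hf
  have habs_pos : ∀ j, 0 < ‖eig j‖ := fun j =>
    (norm_pos_iff.mpr (hstable j).1)
  have hfneg : ∀ j, f j < 0 := fun j => Real.log_neg (habs_pos j) (hstable j).2
  haveI : Nonempty (Fin n) := ⟨⟨0, hn⟩⟩
  obtain ⟨j0, -, hj0⟩ := Finset.exists_max_image Finset.univ f ⟨⟨0, hn⟩, Finset.mem_univ _⟩
  have hL : ∀ j, f j ≤ f j0 := fun j => hj0 j (Finset.mem_univ j)
  -- spread gives ((k:ℝ)+1) * f j0 < f i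
  have hsp : ((k : ℝ) + 1) * f j0 < f i := by
    have := hspread i j0
    rw [div_lt_iff_of_neg (hfneg j0)] at this
    linarith
  -- log of product
  have hlogprod : Real.log (‖∏ j, eig j ^ m j‖) = ∑ j, (m j : ℝ) * f j := by
    rw [norm_prod, Real.log_prod]
    · exact Finset.sum_congr rfl fun j _ => by
        rw [norm_pow, Real.log_pow]
    · intro j _
      rw [norm_pow]; exact pow_ne_zero _ (ne_of_gt (habs_pos j))
  have hsum : ∑ j, (m j : ℝ) * f j < f i := by
    calc ∑ j, (m j : ℝ) * f j ≤ ∑ j, (m j : ℝ) * f j0 :=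
          Finset.sum_le_sum fun j _ =>
            mul_le_mul_of_nonneg_left (hL j) (Nat.cast_nonneg _)
      _ = (∑ j, m j : ℕ) * f j0 := by
          rw [← Finset.sum_mul]; push_cast; ring
      _ ≤ ((k : ℝ) + 1) * f j0 :=
          mul_le_mul_of_nonpos_right hS (le_of_lt (hfneg j0))
      _ < f i := hsp
  intro heq
  have : ‖∏ j, eig j ^ m j‖ < ‖eig i‖ := by
    have hp : (0 : ℝ) < ‖∏ j, eig j ^ m j‖ := by
      rw [norm_prod]
      exact Finset.prod_pos fun j _ => by rw [norm_pow]; exact pow_pos (habs_pos j) _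
    have := hlogprod ▸ hsum
    exact (Real.log_lt_log_iff hp (habs_pos i)).mp this
  rw [heq] at this
  exact lt_irrefl _ this
end
end

section
/- Let n ≥ 1. The set 𝒩_n ∩ 𝒮_n is open in 𝒮_n: for every A ∈ 𝒩_n with all eigenvalues in the open unit disk, there exists ε > 0 such that every real n×n matrix B with all eigenvalues in the open unit disk and ‖B − A‖ < ε belongs to 𝒩_n. -/
noncomputable section
open Matrix Polynomial

/-- `A ∈ 𝒩_n`: `A` is invertible, has `n` distinct complex eigenvalues, and `(A,A)`
is `∞`-nonresonant (no eigenvalue equals a product `λ_1^{m_1} ⋯ λ_n^{m_n}` with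
`m_1 + ⋯ + m_n ≥ 2`). -/
def MemN {n : ℕ} (A : Matrix (Fin n) (Fin n) ℝ) : Prop :=
  A.det ≠ 0 ∧ ∀ eig : Fin n → ℂ, IsEigList A eig →
    Function.Injective eig ∧
      ∀ (i : Fin n) (m : Fin n → ℕ), 2 ≤ ∑ j, m j → eig i ≠ ∏ j, eig j ^ m j

/-- `A ∈ 𝒮_n`: all complex eigenvalues of `A` lie in the open unit disk. -/
def MemS {n : ℕ} (A : Matrix (Fin n) (Fin n) ℝ) : Prop :=
  ∀ eig : Fin n → ℂ, IsEigList A eig → ∀ i,  ‖eig i‖ < 1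

lemma eval_charpoly_det {n : ℕ} (M : Matrix (Fin n) (Fin n) ℂ) (z : ℂ) :
    M.charpoly.eval z = (z • (1 : Matrix (Fin n) (Fin n) ℂ) - M).det := by
  rw [Matrix.charpoly, ← Polynomial.coe_evalRingHom, RingHom.map_det]
  congr 1
  ext i j
  by_cases h : i = j
  · subst h
    simp [Matrix.charmatrix_apply_eq, Matrix.one_apply, Matrix.smul_apply]
  · simp [Matrix.charmatrix_apply_ne _ _ _ h, Matrix.one_apply_ne h, Matrix.smul_apply, h]

lemma isEigList_exists {n : ℕ} (M : Matrix (Fin n) (Fin n) ℝ) :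
    ∃ e : Fin n → ℂ, IsEigList M e := by
  set p := (M.map Complex.ofReal).charpoly with hp
  have hmonic : p.Monic := Matrix.charpoly_monic _
  have hdeg : p.natDegree = n := by
    rw [hp, Matrix.charpoly_natDegree_eq_dim, Fintype.card_fin]
  have hcard : p.roots.card = p.natDegree :=
    Polynomial.splits_iff_card_roots.mp (IsAlgClosed.splits p)
  have hprod : (p.roots.map fun a => X - C a).prod = p :=
    Polynomial.prod_multiset_X_sub_C_of_monic_of_roots_card_eq hmonic hcard
  obtain ⟨l, hlp, hl⟩ : ∃ l : List ℂ, p.roots = (l : Multiset ℂ) ∧ l.length = n :=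
    ⟨p.roots.toList, (Multiset.coe_toList _).symm, by rw [Multiset.length_toList, hcard, hdeg]⟩
  refine ⟨fun i => l.get (Fin.cast hl.symm i), ?_⟩
  show p = _
  rw [← hprod, hlp, Multiset.map_coe, Multiset.prod_coe]
  conv_lhs => rw [← List.ofFn_get l]
  rw [List.map_ofFn, List.prod_ofFn]
  exact Fintype.prod_equiv (finCongr hl) _ _ fun x => rfl

lemma eval_eigList {n : ℕ} (M : Matrix (Fin n) (Fin n) ℝ) (e : Fin n → ℂ)
    (h : IsEigList M e) (z : ℂ) :
    (z • (1 : Matrix (Fin n) (Fin n) ℂ) - M.map Complex.ofReal).det = ∏ i, (z - e i) := by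
  rw [← eval_charpoly_det, h]
  simp [Polynomial.eval_prod]

lemma det_eq_prod_eig {n : ℕ} (M : Matrix (Fin n) (Fin n) ℝ) (e : Fin n → ℂ)
    (h : IsEigList M e) : ((M.det : ℂ)) = ∏ i, e i := by
  have h0 := eval_eigList M e h 0
  have hdet : (M.map Complex.ofReal).det = (M.det : ℂ) := by
    rw [← Complex.ofRealHom_eq_coe, RingHom.map_det]
    rfl
  rw [zero_smul, zero_sub, Matrix.det_neg, hdet, Fintype.card_fin] at h0
  have h1 : ∏ i : Fin n, ((0:ℂ) - e i) = (-1) ^ n * ∏ i, e i := by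
    calc ∏ i : Fin n, ((0:ℂ) - e i) = ∏ i : Fin n, (-1) * e i :=
          Finset.prod_congr rfl fun i _ => by ring
      _ = (-1) ^ n * ∏ i, e i := by
          rw [Finset.prod_mul_distrib, Finset.prod_const, Finset.card_univ, Fintype.card_fin]
  rw [h1] at h0
  have hu : ((-1 : ℂ) ^ n) ≠ 0 := by simp
  exact mul_left_cancel₀ hu h0


def GoodSet (n K : ℕ) : Set (Fin n → ℂ) :=
  {v | (∀ i j : Fin n, i ≠ j → v i ≠ v j) ∧
    ∀ (i : Fin n) (m : Fin n → Fin (K + 1)),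
      2 ≤ ∑ j, (m j : ℕ) → v i ≠ ∏ j, v j ^ (m j : ℕ)}

lemma mem_goodSet_iff {n K : ℕ} {v : Fin n → ℂ} :
    v ∈ GoodSet n K ↔ ((∀ i j : Fin n, i ≠ j → v i ≠ v j) ∧
      ∀ (i : Fin n) (m : Fin n → Fin (K + 1)),
        2 ≤ ∑ j, (m j : ℕ) → v i ≠ ∏ j, v j ^ (m j : ℕ)) := Iff.rfl

lemma goodSet_isOpen (n K : ℕ) : IsOpen (GoodSet n K) := by
  have hU1open : IsOpen {v : Fin n → ℂ | ∀ i j : Fin n, i ≠ j → v i ≠ v j} := by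
    have h : {v : Fin n → ℂ | ∀ i j : Fin n, i ≠ j → v i ≠ v j}
        = ⋂ (i : Fin n) (j : Fin n), {v : Fin n → ℂ | i ≠ j → v i ≠ v j} := by
      ext v
      simp only [Set.mem_setOf_eq, Set.mem_iInter]
    rw [h]
    refine isOpen_iInter_of_finite fun i => isOpen_iInter_of_finite fun j => ?_
    by_cases hij : i = j
    · have : {v : Fin n → ℂ | i ≠ j → v i ≠ v j} = Set.univ := by
        ext v; simp [hij]
      rw [this]; exact isOpen_univ
    · have : {v : Fin n → ℂ | i ≠ j → v i ≠ v j} = {v : Fin n → ℂ | v i ≠ v j} := by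
        ext v; simp [hij]
      rw [this]
      exact isOpen_ne_fun (continuous_apply i) (continuous_apply j)
  have hU2open : IsOpen {v : Fin n → ℂ | ∀ (i : Fin n) (m : Fin n → Fin (K + 1)),
      2 ≤ ∑ j, (m j : ℕ) → v i ≠ ∏ j, v j ^ (m j : ℕ)} := by
    have h : {v : Fin n → ℂ | ∀ (i : Fin n) (m : Fin n → Fin (K + 1)),
        2 ≤ ∑ j, (m j : ℕ) → v i ≠ ∏ j, v j ^ (m j : ℕ)}
        = ⋂ (i : Fin n) (m : Fin n → Fin (K + 1)),
          {v : Fin n → ℂ | 2 ≤ ∑ j, (m j : ℕ) → v i ≠ ∏ j, v j ^ (m j : ℕ)} := by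
      ext v
      simp only [Set.mem_setOf_eq, Set.mem_iInter]
    rw [h]
    refine isOpen_iInter_of_finite fun i => isOpen_iInter_of_finite fun m => ?_
    by_cases hm : 2 ≤ ∑ j, (m j : ℕ)
    · have : {v : Fin n → ℂ | 2 ≤ ∑ j, (m j : ℕ) → v i ≠ ∏ j, v j ^ (m j : ℕ)}
          = {v : Fin n → ℂ | v i ≠ ∏ j, v j ^ (m j : ℕ)} := by
        ext v; simp [hm]
      rw [this]
      exact isOpen_ne_fun (continuous_apply i)
        (continuous_finset_prod _ fun j _ => (continuous_apply j).pow _)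
    · have : {v : Fin n → ℂ | 2 ≤ ∑ j, (m j : ℕ) → v i ≠ ∏ j, v j ^ (m j : ℕ)}
          = Set.univ := by
        ext v; simp [hm]
      rw [this]; exact isOpen_univ
  exact (hU1open.inter hU2open : _)

attribute [local instance] Matrix.normedAddCommGroup

set_option maxHeartbeats 1000000
/-- `𝒩_n ∩ 𝒮_n` is open in `𝒮_n`: every `A ∈ 𝒩_n ∩ 𝒮_n` has an (entrywise-sup-norm)
`ε`-neighborhood whose intersection with `𝒮_n` is contained in `𝒩_n`. -/
theorem nonresonant_open_in_S (n : ℕ) (hn : 1 ≤ n)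
    (A : Matrix (Fin n) (Fin n) ℝ) (hA : MemN A) (hAS : MemS A) :
    ∃ ε > (0 : ℝ), ∀ B : Matrix (Fin n) (Fin n) ℝ,
      MemS B → (∀ i j, |B i j - A i j| < ε) → MemN B := by
  haveI : Nonempty (Fin n) := ⟨⟨0, hn⟩⟩
  obtain ⟨μ, hμ⟩ := isEigList_exists A
  obtain ⟨hμinj, hμres⟩ := hA.2 μ hμ
  have hμ1 : ∀ i,  ‖μ i‖ < 1 := hAS μ hμ
  have hμ0 : ∀ i, μ i ≠ 0 := by
    intro i hi
    apply hA.1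
    have h2 : (A.det : ℂ) = 0 := by
      rw [det_eq_prod_eig A μ hμ]
      exact Finset.prod_eq_zero (Finset.mem_univ i) hi
    exact_mod_cast h2
  obtain ⟨r, hr1, hr0, hrle⟩ : ∃ r : ℝ, r < 1 ∧ 0 ≤ r ∧ ∀ i,  ‖μ i‖ ≤ r := by
    obtain ⟨ir, _, hir⟩ := Finset.exists_max_image (Finset.univ : Finset (Fin n))
      (fun i =>  ‖μ i‖) ⟨⟨0, hn⟩, Finset.mem_univ _⟩
    exact ⟨ ‖μ ir‖, hμ1 ir, norm_nonneg _,
      fun i => hir i (Finset.mem_univ i)⟩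
  obtain ⟨c, hc0, hcle⟩ : ∃ c : ℝ, 0 < c ∧ ∀ i, c ≤  ‖μ i‖ := by
    obtain ⟨ic, _, hic⟩ := Finset.exists_min_image (Finset.univ : Finset (Fin n))
      (fun i =>  ‖μ i‖) ⟨⟨0, hn⟩, Finset.mem_univ _⟩
    exact ⟨ ‖μ ic‖, norm_pos_iff.mpr (hμ0 ic), fun i => hic i (Finset.mem_univ i)⟩
  obtain ⟨r', hr'1, hr'0, hrr'⟩ : ∃ r' : ℝ, r' < 1 ∧ 0 ≤ r' ∧ r + (1 - r) / 2 ≤ r' :=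
    ⟨(r + 1) / 2, by linarith, by linarith, by linarith⟩
  obtain ⟨K, hK⟩ : ∃ K : ℕ, r' ^ K < c / 2 := exists_pow_lt_of_lt_one (by linarith) hr'1
  have hμU : ∀ σ : Equiv.Perm (Fin n), (fun i => μ (σ i)) ∈ GoodSet n K := by
    intro σ
    rw [mem_goodSet_iff]
    constructor
    · intro i j hij h
      exact hij (σ.injective (hμinj h))
    · intro i m hm h
      refine hμres (σ i) (fun k => (m (σ.symm k) : ℕ)) ?_ ?_
      · exact le_trans hm (le_of_eq (Equiv.sum_comp σ.symm fun j => ((m j : ℕ))).symm)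
      · rw [← Equiv.prod_comp σ fun k => μ k ^ ((m (σ.symm k)) : ℕ)]
        simpa using h
  obtain ⟨d, hd0, hgap⟩ : ∃ d : ℝ, 0 < d ∧
      ∀ k k' : Fin n, k ≠ k' → 2 * d <  ‖μ k - μ k'‖ := by
    rcases Finset.eq_empty_or_nonempty ((Finset.univ : Finset (Fin n)).offDiag) with he | hne
    · refine ⟨1, one_pos, fun k k' hkk' => ?_⟩
      have hmem : (k, k') ∈ (Finset.univ : Finset (Fin n)).offDiag :=
        Finset.mem_offDiag.mpr ⟨Finset.mem_univ _, Finset.mem_univ _, hkk'⟩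
      rw [he] at hmem
      exact absurd hmem (Finset.notMem_empty _)
    · obtain ⟨p0, hp0mem, hp0min⟩ := Finset.exists_min_image
        ((Finset.univ : Finset (Fin n)).offDiag) (fun p =>  ‖μ p.1 - μ p.2‖) hne
      have hgpos : 0 <  ‖μ p0.1 - μ p0.2‖ :=
        norm_pos_iff.mpr (sub_ne_zero.mpr fun hcon =>
          (Finset.mem_offDiag.mp hp0mem).2.2 (hμinj hcon))
      refine ⟨ ‖μ p0.1 - μ p0.2‖ / 3, by linarith, fun k k' hkk' => ?_⟩
      have h1 := hp0min (k, k')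
        (Finset.mem_offDiag.mpr ⟨Finset.mem_univ _, Finset.mem_univ _, hkk'⟩)
      simp only at h1
      linarith
  haveI : Nonempty (Equiv.Perm (Fin n)) := ⟨1⟩
  have hball : ∀ σ : Equiv.Perm (Fin n), ∃ ρ > (0:ℝ), ∀ v : Fin n → ℂ,
      dist v (fun i => μ (σ i)) < ρ → v ∈ GoodSet n K := by
    intro σ
    obtain ⟨ρ, hρ0, hρ⟩ := Metric.isOpen_iff.mp (goodSet_isOpen n K) _ (hμU σ)
    exact ⟨ρ, hρ0, fun v hv => hρ hv⟩
  choose ρ hρ0 hρU using hball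
  obtain ⟨δ, hδ0, hδd, hδr, hδc, hδρ⟩ : ∃ δ : ℝ, 0 < δ ∧ δ ≤ d ∧ δ ≤ (1 - r) / 2 ∧
      δ ≤ c / 2 ∧ ∀ σ : Equiv.Perm (Fin n), δ ≤ ρ σ := by
    obtain ⟨σ0, _, hσ0min⟩ := Finset.exists_min_image
      (Finset.univ : Finset (Equiv.Perm (Fin n))) ρ ⟨1, Finset.mem_univ _⟩
    refine ⟨min (min d ((1 - r) / 2)) (min (c / 2) (ρ σ0)), ?_, ?_, ?_, ?_, ?_⟩
    · exact lt_min (lt_min hd0 (by linarith)) (lt_min (by linarith) (hρ0 σ0))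
    · exact le_trans (min_le_left _ _) (min_le_left _ _)
    · exact le_trans (min_le_left _ _) (min_le_right _ _)
    · exact le_trans (min_le_right _ _) (min_le_left _ _)
    · exact fun σ => le_trans (min_le_right _ _)
        (le_trans (min_le_right _ _) (hσ0min σ (Finset.mem_univ σ)))
  have hΦA : ∀ k : Fin n,
      ((μ k) • (1 : Matrix (Fin n) (Fin n) ℂ) - A.map Complex.ofReal).det = 0 := by
    intro k
    rw [eval_eigList A μ hμ]
    exact Finset.prod_eq_zero (Finset.mem_univ k) (sub_self _)
  have hcont : ∀ k : Fin n, ∀ᶠ B in nhds A, 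
      ‖((μ k) • (1 : Matrix (Fin n) (Fin n) ℂ) - B.map Complex.ofReal).det‖ < δ ^ n := by
    intro k
    have hc : ContinuousAt (fun B : Matrix (Fin n) (Fin n) ℝ =>
        ((μ k) • (1 : Matrix (Fin n) (Fin n) ℂ) - B.map Complex.ofReal).det) A :=
      (Continuous.matrix_det
        (continuous_const.sub (continuous_id.matrix_map Complex.continuous_ofReal))).continuousAt
    have ht := hc.tendsto
    rw [hΦA k] at ht
    have h2 := Metric.tendsto_nhds.mp ht (δ ^ n) (pow_pos hδ0 n)
    simpa [Complex.dist_eq] using h2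
  obtain ⟨ε', hε'0, hε'⟩ := Metric.eventually_nhds_iff.mp (Filter.eventually_all.mpr hcont)
  refine ⟨ε' / 2, half_pos hε'0, ?_⟩
  intro B _hBS hBA
  have hΦB : ∀ k : Fin n, 
      ‖((μ k) • (1 : Matrix (Fin n) (Fin n) ℂ) - B.map Complex.ofReal).det‖ < δ ^ n := by
    apply hε'
    have h1 : ‖B - A‖ ≤ ε' / 2 := by
      refine (Matrix.norm_le_iff (le_of_lt (half_pos hε'0))).mpr fun i j => ?_
      rw [Matrix.sub_apply]
      exact le_of_lt (by simpa [Real.norm_eq_abs] using hBA i j)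
    rw [dist_eq_norm]
    linarith
  have hmatch : ∀ e : Fin n → ℂ, IsEigList B e →
      ∃ σ : Equiv.Perm (Fin n), ∀ i,  ‖e i - μ (σ i)‖ < δ := by
    intro e he
    have hnear : ∀ k : Fin n, ∃ i,  ‖μ k - e i‖ < δ := by
      intro k
      by_contra hcon
      push_neg at hcon
      have h1 : δ ^ n ≤  ‖∏ i, (μ k - e i)‖ := by
        rw [norm_prod]
        calc δ ^ n = ∏ _i : Fin n, δ := by
              rw [Finset.prod_const, Finset.card_univ, Fintype.card_fin]
          _ ≤ _ := Finset.prod_le_prod (fun _ _ => le_of_lt hδ0) (fun i _ => hcon i)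
      rw [← eval_eigList B e he (μ k)] at h1
      exact absurd (hΦB k) (not_lt.mpr h1)
    choose τ hτ using hnear
    have hinj : Function.Injective τ := by
      intro k k' hkk
      by_contra hne
      have h2 := hgap k k' hne
      have h3 :  ‖μ k - μ k'‖
          ≤  ‖μ k - e (τ k')‖ +  ‖e (τ k') - μ k'‖ := by
        calc  ‖μ k - μ k'‖
            =  ‖(μ k - e (τ k')) + (e (τ k') - μ k')‖ := by ring_nf
          _ ≤ _ := norm_add_le _ _
      have h4 :  ‖e (τ k') - μ k'‖ < δ := by
        rw [norm_sub_rev]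
        exact hτ k'
      have h5 := hτ k
      rw [hkk] at h5
      linarith
    have hbij := Finite.injective_iff_bijective.mp hinj
    refine ⟨(Equiv.ofBijective τ hbij).symm, fun i => ?_⟩
    have h6 : τ ((Equiv.ofBijective τ hbij).symm i) = i :=
      (Equiv.ofBijective τ hbij).apply_symm_apply i
    have h5 := hτ ((Equiv.ofBijective τ hbij).symm i)
    rw [h6] at h5
    rw [norm_sub_rev]
    exact h5
  have hfacts : ∀ e : Fin n → ℂ, IsEigList B e →
      (∀ i, c / 2 ≤  ‖e i‖ ∧  ‖e i‖ ≤ r') ∧ e ∈ GoodSet n K := by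
    intro e he
    obtain ⟨σ, hσ⟩ := hmatch e he
    constructor
    · intro i
      have hup :  ‖e i‖ ≤  ‖μ (σ i)‖ +  ‖e i - μ (σ i)‖ := by
        calc  ‖e i‖ =  ‖μ (σ i) + (e i - μ (σ i))‖ := by ring_nf
          _ ≤ _ := norm_add_le _ _
      have hlo :  ‖μ (σ i)‖ ≤  ‖e i‖ +  ‖μ (σ i) - e i‖ := by
        calc  ‖μ (σ i)‖ =  ‖e i + (μ (σ i) - e i)‖ := by ring_nf
          _ ≤ _ := norm_add_le _ _
      have h7 :  ‖μ (σ i) - e i‖ < δ := by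
        rw [norm_sub_rev]; exact hσ i
      constructor
      · have := hcle (σ i); linarith [hσ i, hδc]
      · have := hrle (σ i); linarith [hσ i, hδr, hrr']
    · refine hρU σ e ?_
      refine (dist_pi_lt_iff (hρ0 σ)).mpr fun i => ?_
      rw [Complex.dist_eq]
      exact lt_of_lt_of_le (hσ i) (hδρ σ)
  constructor
  · obtain ⟨e0, he0⟩ := isEigList_exists B
    have h1 := (hfacts e0 he0).1
    intro hdet0
    have h2 : (B.det : ℂ) = ∏ i, e0 i := det_eq_prod_eig B e0 he0
    have h3 : ∏ i, e0 i ≠ 0 := Finset.prod_ne_zero_iff.mpr fun i _ hz => by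
      have h4 := (h1 i).1
      rw [hz] at h4
      simp only [norm_zero] at h4
      linarith
    rw [hdet0] at h2
    exact h3 (by simpa using h2.symm)
  · intro e he
    obtain ⟨hmod, hUe⟩ := hfacts e he
    rw [mem_goodSet_iff] at hUe
    obtain ⟨hUe1, hUe2⟩ := hUe
    constructor
    · intro i j hij
      by_contra hne
      exact hUe1 i j hne hij
    · intro i m hm heq
      by_cases hc2 : ∑ j, m j ≤ K
      · have hmj : ∀ j, m j < K + 1 := fun j => Nat.lt_succ_of_le
          (le_trans (Finset.single_le_sum (fun a _ => Nat.zero_le _) (Finset.mem_univ j)) hc2)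
        exact hUe2 i (fun j => ⟨m j, hmj j⟩) hm heq
      · push_neg at hc2
        have h1 :  ‖∏ j, e j ^ m j‖ ≤ r' ^ (∑ j, m j) := by
          calc ‖∏ j, e j ^ m j‖ = ∏ j,  ‖e j‖ ^ m j := by
                rw [norm_prod]
                exact Finset.prod_congr rfl fun j _ => norm_pow _ _
            _ ≤ ∏ j, r' ^ m j := Finset.prod_le_prod
                (fun j _ => pow_nonneg (norm_nonneg _) _)
                (fun j _ => pow_le_pow_left₀ (norm_nonneg _) (hmod j).2 _)
            _ = r' ^ (∑ j, m j) := Finset.prod_pow_eq_pow_sum _ _ _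
        have h2 : r' ^ (∑ j, m j) ≤ r' ^ K :=
          pow_le_pow_of_le_one hr'0 (le_of_lt hr'1) (le_of_lt hc2)
        have h3 := (hmod i).1
        rw [heq] at h3
        linarith
end
end

section
/- Let n ≥ 1. The set 𝒩_n ∩ 𝒮_n is dense in 𝒮_n: for every real n×n matrix A with all complex eigenvalues in the open unit disk and every ε > 0, there exists a real n×n matrix B with all complex eigenvalues in the open unit disk, with n distinct complex eigenvalues, with (B,B) ∞-nonresonant, and with ‖B − A‖ < ε. -/
noncomputable section
open Matrix Polynomial

-- existence of eigenvalue lists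
lemma exists_eigList {n : ℕ} (A : Matrix (Fin n) (Fin n) ℝ) : ∃ e : Fin n → ℂ, IsEigList A e := by
  set p := (A.map Complex.ofReal).charpoly with hp
  have hmonic : p.Monic := Matrix.charpoly_monic _
  have hdeg : p.natDegree = n := by
    simp [hp, Matrix.charpoly_natDegree_eq_dim]
  have hcard : p.roots.card = n := by
    rw [← hdeg]
    exact (Polynomial.splits_iff_card_roots).mp (IsAlgClosed.splits p)
  have hlen : p.roots.toList.length = n := by
    rw [← Multiset.coe_card, Multiset.coe_toList, hcard]
  refine ⟨fun i => p.roots.toList.get (Fin.cast hlen.symm i), ?_⟩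
  have h1 : p = (p.roots.map fun a => X - C a).prod :=
    (Polynomial.prod_multiset_X_sub_C_of_monic_of_roots_card_eq hmonic (by rw [hcard, hdeg])).symm
  have h2 : (∏ i : Fin n, (X - C (p.roots.toList.get (Fin.cast hlen.symm i))))
      = (p.roots.map fun a => X - C a).prod := by
    conv_rhs => rw [← Multiset.coe_toList p.roots]
    rw [Multiset.map_coe, Multiset.prod_coe]
    rw [← List.ofFn_getElem (xs := p.roots.toList.map fun a => X - C a)]
    rw [List.prod_ofFn]
    simp only [List.getElem_map, List.length_map]
    rw [← Fin.prod_congr' _ (by simpa using hlen : (p.roots.toList.map fun a => X - C a).length = n)]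
    rfl
  exact h1.trans h2.symm
open Matrix Polynomial

variable {n : ℕ}

lemma my_eval_charpoly {R : Type*} [CommRing R] (M : Matrix (Fin n) (Fin n) R) (r : R) :
    M.charpoly.eval r = (Matrix.diagonal (fun _ => r) - M).det := by
  rw [Matrix.charpoly, ← Polynomial.coe_evalRingHom, RingHom.map_det]
  congr 1
  ext i j
  by_cases h : i = j
  · subst h; simp [Matrix.charmatrix_apply_eq, Matrix.diagonal_apply_eq]
  · simp [Matrix.charmatrix_apply_ne _ _ _ h, Matrix.diagonal_apply_ne _ h, Matrix.sub_apply]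

lemma my_charpoly_diagonal {R : Type*} [CommRing R] (v : Fin n → R) :
    (Matrix.diagonal v).charpoly = ∏ i, (X - C (v i)) := by
  rw [Matrix.charpoly]
  have : Matrix.charmatrix (Matrix.diagonal v) = Matrix.diagonal (fun i => (X : R[X]) - C (v i)) := by
    ext i j
    by_cases h : i = j
    · subst h; simp
    · simp [Matrix.charmatrix_apply_ne _ _ _ h, Matrix.diagonal_apply_ne _ h]
  rw [this, Matrix.det_diagonal]

open Filter ENNReal

attribute [local instance] Matrix.linftyOpNormedRing Matrix.linftyOpNormedAlgebra

lemma abs_lt_one_of_pow_norm_lt {M : Matrix (Fin n) (Fin n) ℂ} {k : ℕ} (hk : 1 ≤ k)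
    (h : ‖M ^ k‖ < 1) {z : ℂ} (hz : M.charpoly.eval z = 0) : ‖z‖ < 1 := by
  have hdet : (Matrix.diagonal (fun _ => z) - M).det = 0 := by
    rw [← my_eval_charpoly]; exact hz
  obtain ⟨v, hv0, hv⟩ := (Matrix.exists_mulVec_eq_zero_iff).mpr hdet
  have hdiag : Matrix.diagonal (fun _ => z) *ᵥ v = z • v := by
    ext i; simp [Matrix.mulVec_diagonal]
  have hMv : M *ᵥ v = z • v := by
    rw [Matrix.sub_mulVec, hdiag, sub_eq_zero] at hv
    exact hv.symm
  have hpow : ∀ j : ℕ, (M ^ j) *ᵥ v = z ^ j • v := by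
    intro j
    induction j with
    | zero => simp [Matrix.one_mulVec]
    | succ j ih =>
      rw [pow_succ, ← Matrix.mulVec_mulVec, hMv, Matrix.mulVec_smul, ih, pow_succ,
        smul_smul, mul_comm z (z ^ j)]
  have hvnorm : 0 < ‖v‖ := norm_pos_iff.mpr hv0
  have hle : ‖z‖ ^ k * ‖v‖ ≤ ‖M ^ k‖ * ‖v‖ := by
    have := Matrix.linfty_opNorm_mulVec (M ^ k) v
    rw [hpow k, norm_smul] at this
    simpa [norm_pow] using this
  have habs : ‖z‖ ^ k < 1 := by
    have := le_of_mul_le_mul_right hle hvnorm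
    calc ‖z‖ ^ k ≤ ‖M ^ k‖ := this
    _ < 1 := h
  by_contra hc
  push_neg at hc
  exact absurd (one_le_pow₀ hc) (not_le.mpr habs)

lemma exists_pow_norm_lt {M : Matrix (Fin n) (Fin n) ℂ} (hn : 1 ≤ n) {e : Fin n → ℂ}
    (hM : M.charpoly = ∏ i, (X - C (e i))) (he : ∀ i, ‖e i‖ < 1) :
    ∃ k, 1 ≤ k ∧ ‖M ^ k‖ < 1 := by
  have : Nonempty (Fin n) := Fin.pos_iff_nonempty.mp hn
  have hrad : spectralRadius ℂ M < 1 := by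
    have h1 : spectralRadius ℂ M < ((1 : NNReal) : ℝ≥0∞) := by
      apply spectrum.spectralRadius_lt_of_forall_lt
      intro z hz
      rw [spectrum.mem_iff] at hz
      have hdet : (Matrix.diagonal (fun _ => z) - M).det = 0 := by
        by_contra hd
        apply hz
        apply (Matrix.isUnit_iff_isUnit_det _).mpr
        apply isUnit_iff_ne_zero.mpr
        rwa [show (algebraMap ℂ (Matrix (Fin n) (Fin n) ℂ)) z = Matrix.diagonal (fun _ => z) by
          rw [Matrix.algebraMap_eq_diagonal]; rfl]
      have hzroot : M.charpoly.eval z = 0 := by rw [my_eval_charpoly]; exact hdet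
      rw [hM] at hzroot
      simp only [eval_prod, eval_sub, eval_X, eval_C, Finset.prod_eq_zero_iff] at hzroot
      obtain ⟨i, -, hi⟩ := hzroot
      rw [sub_eq_zero.mp hi]
      simpa [← NNReal.coe_lt_one, coe_nnnorm] using he i
    simpa using h1
  -- Gelfand's formula
  have hG := spectrum.pow_nnnorm_pow_one_div_tendsto_nhds_spectralRadius M
  have hev : ∀ᶠ k : ℕ in atTop, ((‖M ^ k‖₊ : ℝ≥0∞) ^ (1 / (k : ℝ))) < 1 :=
    hG.eventually_lt_const hrad
  obtain ⟨k, hk⟩ := (hev.and (eventually_ge_atTop 1)).exists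
  refine ⟨k, hk.2, ?_⟩
  have hk0 : (k : ℝ) ≠ 0 := Nat.cast_ne_zero.mpr (by omega)
  have hx : (‖M ^ k‖₊ : ℝ≥0∞) < 1 := by
    have hrw : (‖M ^ k‖₊ : ℝ≥0∞) = ((‖M ^ k‖₊ : ℝ≥0∞) ^ (1 / (k : ℝ))) ^ (k : ℕ) := by
      rw [← ENNReal.rpow_natCast (((‖M ^ k‖₊ : ℝ≥0∞)) ^ (1 / (k : ℝ))) k, ← ENNReal.rpow_mul,
        one_div, inv_mul_cancel₀ hk0, ENNReal.rpow_one]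
    rw [hrw]
    exact pow_lt_one₀ zero_le hk.1 (by omega)
  have := ENNReal.coe_lt_one_iff.mp hx
  rwa [← NNReal.coe_lt_one, coe_nnnorm] at this

open MvPolynomial in
lemma coeff_eq_esymm {B : Matrix (Fin n) (Fin n) ℝ} {e : Fin n → ℂ} (hB : IsEigList B e)
    (k : Fin n) :
    (B.map Complex.ofReal).charpoly.coeff (n - (k.1 + 1)) =
      (-1 : ℂ) ^ (k.1 + 1) * aeval e (esymm (Fin n) ℂ (k.1 + 1)) := by
  have hk1 : k.1 + 1 ≤ n := k.isLt
  have hcard : Multiset.card (Finset.univ.val.map e) = n := by simp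
  have h1 : (B.map Complex.ofReal).charpoly
      = ((Finset.univ.val.map e).map fun z => Polynomial.X - Polynomial.C z).prod := by
    rw [hB, Finset.prod_eq_multiset_prod, Multiset.map_map]
    rfl
  rw [h1, Multiset.prod_X_sub_C_coeff _ (by rw [hcard]; omega), hcard,
    Nat.sub_sub_self hk1, aeval_esymm_eq_multiset_esymm]

open MvPolynomial in
lemma aeval_coeffs_eq {B : Matrix (Fin n) (Fin n) ℝ} {e : Fin n → ℂ} (hB : IsEigList B e)
    (Q : MvPolynomial (Fin n) ℂ) :
    aeval (fun k : Fin n => (-1 : ℂ) ^ (k.1 + 1) *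
        (B.map Complex.ofReal).charpoly.coeff (n - (k.1 + 1))) Q
      = aeval e (aeval (fun k : Fin n => esymm (Fin n) ℂ (k.1 + 1)) Q) := by
  have hcomp : (aeval e : MvPolynomial (Fin n) ℂ →ₐ[ℂ] ℂ).comp
      (aeval (fun k : Fin n => esymm (Fin n) ℂ (k.1 + 1)))
      = (aeval (fun k : Fin n => aeval e (esymm (Fin n) ℂ (k.1 + 1)))
          : MvPolynomial (Fin n) ℂ →ₐ[ℂ] ℂ) := comp_aeval _ _
  rw [show aeval e (aeval (fun k : Fin n => esymm (Fin n) ℂ (k.1 + 1)) Q)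
    = ((aeval e : MvPolynomial (Fin n) ℂ →ₐ[ℂ] ℂ).comp
        (aeval (fun k : Fin n => esymm (Fin n) ℂ (k.1 + 1)))) Q from rfl, hcomp]
  have harg : (fun k : Fin n => (-1 : ℂ) ^ (k.1 + 1) *
      (B.map Complex.ofReal).charpoly.coeff (n - (k.1 + 1)))
      = fun k : Fin n => aeval e (esymm (Fin n) ℂ (k.1 + 1)) := by
    funext k
    rw [coeff_eq_esymm hB k, ← mul_assoc, ← mul_pow]
    norm_num
  rw [harg]

open MvPolynomial in
lemma exists_Q {S : MvPolynomial (Fin n) ℂ} (hS : S.IsSymmetric) :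
    ∃ Q : MvPolynomial (Fin n) ℂ,
      S = aeval (fun k : Fin n => esymm (Fin n) ℂ (k.1 + 1)) Q := by
  obtain ⟨Q, hQ⟩ := esymmAlgHom_surjective (σ := Fin n) (R := ℂ) (le_of_eq (Fintype.card_fin n)) ⟨S, hS⟩
  refine ⟨Q, ?_⟩
  have := congrArg Subtype.val hQ
  rw [esymmAlgHom_apply] at this
  exact this.symm

open MvPolynomial in
def Sres (n : ℕ) (m : Fin n → ℕ) : MvPolynomial (Fin n) ℂ :=
  ∏ σ : Equiv.Perm (Fin n), ∏ i : Fin n,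
    (MvPolynomial.X (σ i) - ∏ j : Fin n, MvPolynomial.X (σ j) ^ m j)

open MvPolynomial in
def Sdisc (n : ℕ) : MvPolynomial (Fin n) ℂ :=
  ∏ p ∈ Finset.univ.offDiag, (MvPolynomial.X p.1 - MvPolynomial.X p.2)

open MvPolynomial in
lemma Sres_symm (m : Fin n → ℕ) : (Sres n m).IsSymmetric := by
  intro τ
  have : rename τ (Sres n m) = ∏ σ : Equiv.Perm (Fin n), ∏ i : Fin n,
      (MvPolynomial.X (((Equiv.mulLeft τ) σ) i)
        - ∏ j : Fin n, MvPolynomial.X (((Equiv.mulLeft τ) σ) j) ^ m j) := by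
    simp only [Sres, map_prod, map_sub, map_pow, rename_X, Equiv.coe_mulLeft,
      Equiv.Perm.mul_apply]
  rw [this, Equiv.prod_comp (Equiv.mulLeft τ)
    (fun σ : Equiv.Perm (Fin n) => ∏ i : Fin n,
      (MvPolynomial.X (σ i) - ∏ j : Fin n, MvPolynomial.X (σ j) ^ m j))]
  rfl

open MvPolynomial in
lemma Sdisc_symm : (Sdisc n).IsSymmetric := by
  intro τ
  unfold Sdisc
  rw [map_prod]
  refine Finset.prod_nbij' (fun p => (τ p.1, τ p.2)) (fun p => (τ⁻¹ p.1, τ⁻¹ p.2)) ?_ ?_ ?_ ?_ ?_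
  · intro p hp
    simp only [Finset.mem_offDiag] at hp ⊢
    exact ⟨Finset.mem_univ _, Finset.mem_univ _, fun h => hp.2.2 (τ.injective h)⟩
  · intro p hp
    simp only [Finset.mem_offDiag] at hp ⊢
    exact ⟨Finset.mem_univ _, Finset.mem_univ _, fun h => hp.2.2 (Equiv.injective _ h)⟩
  · intro p _; simp
  · intro p _; simp
  · intro p _
    rw [map_sub, rename_X, rename_X]

open MvPolynomial in
lemma aeval_Sres (m : Fin n → ℕ) (v : Fin n → ℂ) :
    aeval v (Sres n m) = ∏ σ : Equiv.Perm (Fin n), ∏ i : Fin n,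
      (v (σ i) - ∏ j : Fin n, v (σ j) ^ m j) := by
  simp only [Sres, map_prod, map_sub, map_pow, MvPolynomial.aeval_X]

open MvPolynomial in
lemma aeval_Sdisc (v : Fin n → ℂ) :
    aeval v (Sdisc n) = ∏ p ∈ Finset.univ.offDiag, (v p.1 - v p.2) := by
  simp only [Sdisc, map_prod, map_sub, MvPolynomial.aeval_X]

def dd (n : ℕ) : Fin n → ℝ := fun i => 1/2 + (i.1+1)/(10*(n+1))

lemma dd_gt (i : Fin n) : 1/2 < dd n i := by
  unfold dd
  have : (0:ℝ) < (i.1+1)/(10*(n+1)) := by positivity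
  linarith

lemma dd_le (i : Fin n) : dd n i ≤ 3/5 := by
  unfold dd
  have hi : (i.1 : ℝ) < n := by exact_mod_cast i.isLt
  have h1 : (i.1 + 1 : ℝ) ≤ n + 1 := by linarith
  have h2 : (i.1+1)/(10*((n:ℝ)+1)) ≤ ((n:ℝ)+1)/(10*((n:ℝ)+1)) :=
    div_le_div_of_nonneg_right h1 (by positivity) |>.trans_eq rfl
  have h3 : ((n:ℝ)+1)/(10*((n:ℝ)+1)) = 1/10 := by
    rw [div_eq_iff (by positivity)]; ring
  linarith [h2.trans_eq h3]

lemma dd_inj : Function.Injective (dd n) := by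
  have hsm : StrictMono (dd n) := by
    intro i j hij
    unfold dd
    have hv : (i.1 : ℝ) < j.1 := by exact_mod_cast Fin.lt_iff_val_lt_val.mp hij
    have hD : (0:ℝ) < 10*((n:ℝ)+1) := by positivity
    have := (div_lt_div_iff_of_pos_right hD).mpr (show (i.1+1:ℝ) < j.1+1 by linarith)
    linarith
  exact hsm.injective

lemma dd_eiglist : IsEigList (Matrix.diagonal (dd n)) (fun i => ((dd n i : ℝ) : ℂ)) := by
  unfold IsEigList
  rw [Matrix.diagonal_map (by simp), my_charpoly_diagonal]

lemma dd_prod_small (σ : Equiv.Perm (Fin n)) (i : Fin n) (m : Fin n → ℕ) (hm : 2 ≤ ∑ j, m j) :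
    ((dd n (σ i) : ℝ) : ℂ) - ∏ j : Fin n, ((dd n (σ j) : ℝ) : ℂ) ^ m j ≠ 0 := by
  have key : ∏ j : Fin n, dd n (σ j) ^ m j < dd n (σ i) := by
    have h1 : ∏ j : Fin n, dd n (σ j) ^ m j ≤ ∏ j : Fin n, (3/5 : ℝ) ^ m j := by
      apply Finset.prod_le_prod
      · intro j _; exact pow_nonneg (by linarith [dd_gt (σ j)]) _
      · intro j _
        exact pow_le_pow_left₀ (by linarith [dd_gt (σ j)]) (dd_le (σ j)) _
    have h2 : ∏ j : Fin n, (3/5 : ℝ) ^ m j = (3/5 : ℝ) ^ (∑ j, m j) := by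
      rw [Finset.prod_pow_eq_pow_sum]
    have h3 : (3/5 : ℝ) ^ (∑ j, m j) ≤ (3/5 : ℝ) ^ 2 :=
      pow_le_pow_of_le_one (by norm_num) (by norm_num) hm
    have := dd_gt (σ i)
    nlinarith
  have : (∏ j : Fin n, ((dd n (σ j) : ℝ) : ℂ) ^ m j) = ((∏ j : Fin n, dd n (σ j) ^ m j : ℝ) : ℂ) := by
    push_cast; ring
  rw [this, sub_ne_zero]
  intro h
  have := Complex.ofReal_inj.mp h
  linarith

def NN (A E : Matrix (Fin n) (Fin n) ℝ) : Matrix (Fin n) (Fin n) (Polynomial ℂ) :=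
  Matrix.of fun i j => Polynomial.C ((A i j : ℝ) : ℂ) + Polynomial.X * Polynomial.C ((E i j : ℝ) : ℂ)

lemma NN_map (A E : Matrix (Fin n) (Fin n) ℝ) (t : ℝ) :
    (NN A E).map (Polynomial.evalRingHom ((t:ℝ) : ℂ)) = (A + t • E).map Complex.ofReal := by
  ext i j
  simp [NN, Matrix.map_apply, Matrix.add_apply, Matrix.smul_apply]
  push_cast
  ring

def cc (A E : Matrix (Fin n) (Fin n) ℝ) : Fin n → Polynomial ℂ :=
  fun k => (-1 : Polynomial ℂ) ^ (k.1+1) * ((NN A E).charpoly.coeff (n - (k.1+1)))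

open MvPolynomial in
lemma eval_aeval_coeffs (A E : Matrix (Fin n) (Fin n) ℝ) (Q : MvPolynomial (Fin n) ℂ) (t : ℝ) :
    Polynomial.eval ((t:ℝ) : ℂ) (aeval (cc A E) Q)
      = aeval (fun k : Fin n => (-1 : ℂ) ^ (k.1+1) *
          ((A + t • E).map Complex.ofReal).charpoly.coeff (n - (k.1+1))) Q := by
  have h0 : Polynomial.eval ((t:ℝ) : ℂ) (aeval (cc A E) Q)
      = (Polynomial.aeval ((t:ℝ) : ℂ) : Polynomial ℂ →ₐ[ℂ] ℂ) (aeval (cc A E) Q) := by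
    rw [Polynomial.coe_aeval_eq_eval]
  rw [h0, comp_aeval_apply]
  have harg : (fun k : Fin n => (Polynomial.aeval ((t:ℝ) : ℂ)) (cc A E k))
      = fun k : Fin n => (-1 : ℂ) ^ (k.1+1) *
          ((A + t • E).map Complex.ofReal).charpoly.coeff (n - (k.1+1)) := by
    funext k
    simp only [cc, Polynomial.coe_aeval_eq_eval, Polynomial.eval_mul, Polynomial.eval_pow,
      Polynomial.eval_neg, Polynomial.eval_one]
    congr 1
    rw [show Polynomial.eval ((t:ℝ) : ℂ) ((NN A E).charpoly.coeff (n - (k.1+1)))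
      = ((NN A E).charpoly.map (Polynomial.evalRingHom ((t:ℝ) : ℂ))).coeff (n - (k.1+1)) by
        rw [Polynomial.coeff_map]; rfl]
    rw [← Matrix.charpoly_map, NN_map]
  rw [harg]

open MvPolynomial in
lemma eval_H_eq (A E : Matrix (Fin n) (Fin n) ℝ) {S Q : MvPolynomial (Fin n) ℂ}
    (hQ : S = aeval (fun k : Fin n => esymm (Fin n) ℂ (k.1 + 1)) Q)
    {t : ℝ} {e : Fin n → ℂ} (hB : IsEigList (A + t • E) e) :
    Polynomial.eval ((t:ℝ) : ℂ) (aeval (cc A E) Q) = aeval e S := by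
  rw [eval_aeval_coeffs, aeval_coeffs_eq hB Q, hQ]


/-- `𝒩_n ∩ 𝒮_n` is dense in `𝒮_n`: every `A ∈ 𝒮_n` is approximated, entrywise within any
`ε > 0`, by a matrix `B ∈ 𝒮_n` that is invertible, has `n` distinct complex eigenvalues,
and is `∞`-nonresonant. -/
theorem nonresonant_dense_in_S (n : ℕ) (hn : 1 ≤ n)
    (A : Matrix (Fin n) (Fin n) ℝ) (hAS : MemS A) (ε : ℝ) (hε : 0 < ε) :
    ∃ B : Matrix (Fin n) (Fin n) ℝ,
      MemS B ∧ MemN B ∧ ∀ i j, |B i j - A i j| < ε := by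
  classical
  have hFin : Nonempty (Fin n) := Fin.pos_iff_nonempty.mp hn
  obtain ⟨e0, he0⟩ := exists_eigList A
  obtain ⟨k, hk1, hknorm⟩ := exists_pow_norm_lt hn he0 (fun i => hAS e0 he0 i)
  set M : Matrix (Fin n) (Fin n) ℝ := Matrix.diagonal (dd n) with hMdef
  set E : Matrix (Fin n) (Fin n) ℝ := M - A with hEdef
  -- mapping of the line to ℂ
  have hmap : ∀ t : ℝ, (A + t • E).map Complex.ofReal
      = (A.map Complex.ofReal) + (t:ℂ) • (E.map Complex.ofReal) := by
    intro t
    ext i j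
    simp [Matrix.map_apply, Matrix.add_apply, Matrix.smul_apply]
  -- continuity: δ₀
  have hcont : Continuous (fun s : ℝ =>
      ‖((A.map Complex.ofReal) + (s:ℂ) • (E.map Complex.ofReal)) ^ k‖) := by
    apply Continuous.norm
    apply Continuous.pow
    exact continuous_const.add ((Complex.continuous_ofReal).smul continuous_const)
  obtain ⟨δ₀, hδ₀pos, hδ₀⟩ : ∃ δ₀ > 0, ∀ s : ℝ, |s| < δ₀ →
      ‖((A.map Complex.ofReal) + (s:ℂ) • (E.map Complex.ofReal)) ^ k‖ < 1 := by
    have hmem : (0:ℝ) ∈ {s : ℝ |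
        ‖((A.map Complex.ofReal) + (s:ℂ) • (E.map Complex.ofReal)) ^ k‖ < 1} := by
      simpa using hknorm
    have := (isOpen_lt hcont continuous_const).mem_nhds hmem
    rw [Metric.mem_nhds_iff] at this
    obtain ⟨δ₀, hδ₀, hball⟩ := this
    exact ⟨δ₀, hδ₀, fun s hs => hball (by simpa [Real.dist_eq] using hs)⟩
  -- entry bound
  set Cb : ℝ := (∑ i, ∑ j, |E i j|) + 1 with hCb
  have hCbpos : 0 < Cb := by
    have : (0:ℝ) ≤ ∑ i, ∑ j, |E i j| :=
      Finset.sum_nonneg fun _ _ => Finset.sum_nonneg fun _ _ => abs_nonneg _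
    rw [hCb]; linarith
  have hECb : ∀ i j, |E i j| ≤ Cb := by
    intro i j
    have h2 : |E i j| ≤ ∑ j', |E i j'| :=
      Finset.single_le_sum (f := fun j' => |E i j'|) (fun _ _ => abs_nonneg _)
        (Finset.mem_univ j)
    have h3 : (∑ j', |E i j'|) ≤ ∑ i', ∑ j', |E i' j'| :=
      Finset.single_le_sum (f := fun i' => ∑ j', |E i' j'|)
        (fun _ _ => Finset.sum_nonneg fun _ _ => abs_nonneg _) (Finset.mem_univ i)
    rw [hCb]; linarith
  -- polynomials
  obtain ⟨Qdisc, hQdisc⟩ := exists_Q (Sdisc_symm (n := n))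
  choose Qres hQres using fun m : Fin n → ℕ => exists_Q (Sres_symm (n := n) m)
  set Hdisc : Polynomial ℂ := MvPolynomial.aeval (cc A E) Qdisc with hHdisc
  set Hres : (Fin n → ℕ) → Polynomial ℂ :=
    fun m => MvPolynomial.aeval (cc A E) (Qres m) with hHres
  set qdet : Polynomial ℂ := (NN A E).det with hqdet
  -- value of qdet
  have hqdet_eval : ∀ t : ℝ, Polynomial.eval ((t:ℝ):ℂ) qdet = (((A + t • E).det : ℝ) : ℂ) := by
    intro t
    rw [hqdet, show Polynomial.eval ((t:ℝ):ℂ) (NN A E).det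
        = Polynomial.evalRingHom ((t:ℝ):ℂ) (NN A E).det from rfl,
      RingHom.map_det, RingHom.mapMatrix_apply, NN_map]
    exact (RingHom.map_det Complex.ofRealHom (A + t • E)).symm
  -- eigenvalue list at t = 1
  have hM1 : A + (1:ℝ) • E = M := by rw [hEdef]; simp
  have hMeig : IsEigList (A + (1:ℝ) • E) (fun i => ((dd n i : ℝ) : ℂ)) := by
    rw [hM1]; exact dd_eiglist
  -- nonvanishing
  have hHres_ne : ∀ m : Fin n → ℕ, 2 ≤ ∑ j, m j → Hres m ≠ 0 := by
    intro m hm h0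
    have h1 : Polynomial.eval ((1:ℝ):ℂ) (Hres m) = MvPolynomial.aeval
        (fun i => ((dd n i : ℝ) : ℂ)) (Sres n m) := eval_H_eq A E (hQres m) hMeig
    rw [h0, Polynomial.eval_zero, aeval_Sres] at h1
    have h2 : (∏ σ : Equiv.Perm (Fin n), ∏ i : Fin n,
        (((dd n (σ i) : ℝ) : ℂ) - ∏ j : Fin n, ((dd n (σ j) : ℝ) : ℂ) ^ m j)) ≠ 0 :=
      Finset.prod_ne_zero_iff.mpr (fun σ _ =>
        Finset.prod_ne_zero_iff.mpr (fun i _ => dd_prod_small σ i m hm))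
    exact h2 h1.symm
  have hHdisc_ne : Hdisc ≠ 0 := by
    intro h0
    have h1 : Polynomial.eval ((1:ℝ):ℂ) Hdisc = MvPolynomial.aeval
        (fun i => ((dd n i : ℝ) : ℂ)) (Sdisc n) := eval_H_eq A E hQdisc hMeig
    rw [h0, Polynomial.eval_zero, aeval_Sdisc] at h1
    have h2 : (∏ p ∈ Finset.univ.offDiag,
        (((dd n p.1 : ℝ) : ℂ) - ((dd n p.2 : ℝ) : ℂ))) ≠ 0 :=
      Finset.prod_ne_zero_iff.mpr (fun p hp => sub_ne_zero.mpr
        (fun h => (Finset.mem_offDiag.mp hp).2.2 (dd_inj (Complex.ofReal_inj.mp h))))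
    exact h2 h1.symm
  have hqdet_ne : qdet ≠ 0 := by
    intro h0
    have h1 := hqdet_eval 1
    rw [h0, Polynomial.eval_zero, hM1] at h1
    have h2 : M.det ≠ 0 := by
      rw [hMdef, Matrix.det_diagonal]
      exact Finset.prod_ne_zero_iff.mpr (fun i _ => by linarith [dd_gt i])
    exact h2 (by exact_mod_cast h1.symm)
  -- countable bad set
  have hroot : ∀ q : Polynomial ℂ, q ≠ 0 →
      {t : ℝ | Polynomial.eval ((t:ℝ):ℂ) q = 0}.Countable := by
    intro q hq
    have hsub : {t : ℝ | Polynomial.eval ((t:ℝ):ℂ) q = 0}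
        = Complex.ofReal ⁻¹' {z : ℂ | q.IsRoot z} := rfl
    rw [hsub]
    exact ((Polynomial.finite_setOf_isRoot hq).preimage
      Complex.ofReal_injective.injOn).countable
  set T : Set ℝ := {t | Polynomial.eval ((t:ℝ):ℂ) qdet = 0} ∪
      ({t | Polynomial.eval ((t:ℝ):ℂ) Hdisc = 0} ∪
        ⋃ m ∈ {m : Fin n → ℕ | 2 ≤ ∑ j, m j},
          {t | Polynomial.eval ((t:ℝ):ℂ) (Hres m) = 0}) with hT
  have hTc : T.Countable := by
    refine (hroot _ hqdet_ne).union ((hroot _ hHdisc_ne).union ?_)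
    exact Set.Countable.biUnion (Set.to_countable _) (fun m hm => hroot _ (hHres_ne m hm))
  -- choose t
  set δ : ℝ := min δ₀ (min (ε / Cb) 1) with hδ
  have hδpos : 0 < δ := by
    apply lt_min hδ₀pos
    exact lt_min (div_pos hε hCbpos) one_pos
  obtain ⟨t, htIoo, htT⟩ : ∃ t, t ∈ Set.Ioo 0 δ ∧ t ∉ T := by
    by_contra hcon
    push_neg at hcon
    have hsub2 : Set.Ioo 0 δ ⊆ T := fun x hx => hcon x hx
    have h1 : MeasureTheory.volume (Set.Ioo 0 δ) = 0 :=
      le_antisymm (le_trans (MeasureTheory.measure_mono hsub2)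
        (le_of_eq (Set.Countable.measure_zero hTc _))) zero_le
    rw [Real.volume_Ioo] at h1
    simp only [sub_zero] at h1
    exact absurd h1 (by simp [ENNReal.ofReal_eq_zero, not_le, hδpos])
  obtain ⟨ht0, htδ⟩ := htIoo
  set B : Matrix (Fin n) (Fin n) ℝ := A + t • E with hB
  have htabs : |t| < δ₀ := by
    rw [abs_of_pos ht0]
    exact htδ.trans_le (min_le_left _ _)
  have hBnorm : ‖((B.map Complex.ofReal)) ^ k‖ < 1 := by
    rw [hB, hmap t]
    exact hδ₀ t htabs
  have hTdet : Polynomial.eval ((t:ℝ):ℂ) qdet ≠ 0 := fun h => htT (Or.inl h)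
  have hTdisc : Polynomial.eval ((t:ℝ):ℂ) Hdisc ≠ 0 := fun h => htT (Or.inr (Or.inl h))
  have hTres : ∀ m : Fin n → ℕ, 2 ≤ ∑ j, m j →
      Polynomial.eval ((t:ℝ):ℂ) (Hres m) ≠ 0 := by
    intro m hm h
    exact htT (Or.inr (Or.inr (Set.mem_biUnion hm h)))
  refine ⟨B, ?_, ⟨?_, ?_⟩, ?_⟩
  · -- MemS
    intro e he i
    apply abs_lt_one_of_pow_norm_lt hk1 hBnorm
    rw [he, Polynomial.eval_prod]
    apply Finset.prod_eq_zero (Finset.mem_univ i)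
    simp
  · -- det ≠ 0
    intro h0
    apply hTdet
    rw [hqdet_eval t, ← hB, h0]
    simp
  · -- eig list conditions
    intro e he
    constructor
    · intro x y hxy
      by_contra hne
      apply hTdisc
      rw [eval_H_eq A E hQdisc he, aeval_Sdisc]
      refine Finset.prod_eq_zero (i := (x, y)) (Finset.mem_offDiag.mpr
        ⟨Finset.mem_univ _, Finset.mem_univ _, hne⟩) ?_
      simp [hxy]
    · intro i m hm heq
      apply hTres m hm
      rw [eval_H_eq A E (hQres m) he, aeval_Sres]
      apply Finset.prod_eq_zero (Finset.mem_univ (1 : Equiv.Perm (Fin n)))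
      apply Finset.prod_eq_zero (Finset.mem_univ i)
      simp only [Equiv.Perm.coe_one, id_eq]
      rw [heq, sub_self]
  · -- closeness
    intro i j
    have h1 : B i j - A i j = t * E i j := by
      rw [hB]; simp [Matrix.add_apply, Matrix.smul_apply]
    rw [h1, abs_mul, abs_of_pos ht0]
    have h2 : t * |E i j| ≤ t * Cb := mul_le_mul_of_nonneg_left (hECb i j) ht0.le
    have h3 : t < ε / Cb := htδ.trans_le ((min_le_right _ _).trans (min_le_left _ _))
    have h4 : t * Cb < (ε / Cb) * Cb := mul_lt_mul_of_pos_right h3 hCbpos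
    rw [div_mul_cancel₀ _ (ne_of_gt hCbpos)] at h4
    linarith
end
end

section
/- Let Φ : ℝ × ℝ^n → ℝ^n be a C^1 flow, and let Γ ⊂ ℝ^n be the image of a τ-periodic orbit of Φ (τ > 0, Φ^τ(x) = x for all x ∈ Γ, and Γ is an orbit of Φ). Let ψ : ℝ^n → ℂ be a C^1 Koopman eigenfunction of Φ with eigenvalue μ ∈ ℂ such that ψ ≡ 0 on Γ and Dψ(x) ≠ 0 for all x ∈ Γ (a principal eigenfunction for Γ). Then for every x₀ ∈ Γ, the differential Dψ(x₀) satisfies Dψ(x₀) ∘ D_{x₀}Φ^τ = e^{μ τ} · Dψ(x₀); i.e., Dψ(x₀) is a nonzero eigenvector of the (complexified) adjoint of D_{x₀}Φ^τ with eigenvalue e^{μ τ}. In particular, e^{μ τ} is an eigenvalue of D_{x₀}Φ^τ (a Floquet multiplier of Γ). -/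
noncomputable section
open Filter Topology

/-- `Φ` is a C¹ flow on `ℝ^n`. -/
def IsC1Flow {n : ℕ} (Φ : ℝ → (Fin n → ℝ) → (Fin n → ℝ)) : Prop :=
  ContDiff ℝ 1 (fun p : ℝ × (Fin n → ℝ) => Φ p.1 p.2) ∧
    (∀ x, Φ 0 x = x) ∧ ∀ s t x, Φ (s + t) x = Φ s (Φ t x)

/-- `ψ` is a Koopman eigenfunction of the flow `Φ` with eigenvalue `μ`. -/
def IsKoopmanEigenfunction {n : ℕ} (Φ : ℝ → (Fin n → ℝ) → (Fin n → ℝ)) (μ : ℂ)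
    (ψ : (Fin n → ℝ) → ℂ) : Prop :=
  (∃ x, ψ x ≠ 0) ∧ ∀ t x, ψ (Φ t x) = Complex.exp (μ * t) * ψ x

/-- If `Γ` is the image of a `τ`-periodic orbit of a C¹ flow `Φ` and `ψ` is a C¹ Koopman
eigenfunction with eigenvalue `μ` that vanishes identically on `Γ` with nonvanishing
differential on `Γ`, then for every `x₀ ∈ Γ` the nonzero functional `Dψ(x₀)` satisfies
`Dψ(x₀) ∘ D_{x₀}Φ^τ = e^{μτ} Dψ(x₀)`; in particular `e^{μτ}` is a complex eigenvalue of
`D_{x₀}Φ^τ` (a Floquet multiplier of `Γ`). -/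
theorem principal_eigenfunction_differential_is_adjoint_eigenvector_periodic_orbit
    (n : ℕ) (Φ : ℝ → (Fin n → ℝ) → (Fin n → ℝ)) (hΦ : IsC1Flow Φ)
    (τ : ℝ) (hτ : 0 < τ) (x₁ : Fin n → ℝ) (hper : Φ τ x₁ = x₁)
    (Γ : Set (Fin n → ℝ)) (hΓ : Γ = Set.range fun t => Φ t x₁)
    (ψ : (Fin n → ℝ) → ℂ) (hψC : ContDiff ℝ 1 ψ)
    (μ : ℂ) (hψ : IsKoopmanEigenfunction Φ μ ψ)
    (hψΓ : ∀ x ∈ Γ, ψ x = 0) (hdψ : ∀ x ∈ Γ, fderiv ℝ ψ x ≠ 0) :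
    ∀ x₀ ∈ Γ,
      (fderiv ℝ ψ x₀).comp (fderiv ℝ (Φ τ) x₀) = Complex.exp (μ * τ) • fderiv ℝ ψ x₀ ∧
      ∃ v : Fin n → ℂ, v ≠ 0 ∧
        ((LinearMap.toMatrix' (fderiv ℝ (Φ τ) x₀).toLinearMap).map Complex.ofReal).mulVec v
          = Complex.exp (μ * τ) • v := by
  intro x₀ hx₀
  obtain ⟨t, ht⟩ := hΓ ▸ hx₀
  have hfix : Φ τ x₀ = x₀ := by
    rw [← ht, ← hΦ.2.2, add_comm, hΦ.2.2, hper]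
  set lam := Complex.exp (μ * τ) with hlam
  have hψd : Differentiable ℝ ψ := hψC.differentiable one_ne_zero
  have hΦd : Differentiable ℝ (Φ τ) := by
    intro x
    have h := ((hΦ.1.differentiable one_ne_zero) (τ, x)).comp x
      ((differentiableAt_const τ).prodMk differentiableAt_id)
    exact h
  have key : (fun x => ψ (Φ τ x)) = fun x => lam * ψ x := by
    funext x; exact hψ.2 τ x
  have h1 : fderiv ℝ (fun x => ψ (Φ τ x)) x₀
      = (fderiv ℝ ψ x₀).comp (fderiv ℝ (Φ τ) x₀) := by
    have := fderiv_comp x₀ (hψd (Φ τ x₀)) (hΦd x₀)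
    rwa [hfix] at this
  have h2 : fderiv ℝ (fun x => lam * ψ x) x₀ = lam • fderiv ℝ ψ x₀ :=
    fderiv_const_mul (hψd x₀) lam
  have hmain : (fderiv ℝ ψ x₀).comp (fderiv ℝ (Φ τ) x₀) = lam • fderiv ℝ ψ x₀ := by
    rw [← h1, key, h2]
  refine ⟨hmain, ?_⟩
  -- eigenvector part
  set L := fderiv ℝ (Φ τ) x₀ with hL
  set D := fderiv ℝ ψ x₀ with hD
  set A := LinearMap.toMatrix' L.toLinearMap with hA
  have hLv : ∀ v, L v = A.mulVec v := by
    intro v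
    have : Matrix.toLin' A = L.toLinearMap := Matrix.toLin'_toMatrix' _
    rw [← Matrix.toLin'_apply A v, this]; rfl
  set M := A.map Complex.ofReal with hM
  set w : Fin n → ℂ := fun j => D (Pi.single j 1) with hw
  have hDsum : ∀ v : Fin n → ℝ, D v = ∑ j, (v j : ℂ) * w j := by
    intro v
    conv_lhs => rw [pi_eq_sum_univ v]
    rw [map_sum]
    refine Finset.sum_congr rfl fun j _ => ?_
    rw [map_smul, Complex.real_smul]
    congr 2
    funext k
    simp [Pi.single_apply, eq_comm]
  have hwne : w ≠ 0 := by
    intro hw0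
    apply hdψ x₀ hx₀
    ext v
    have := hDsum v
    simp only [hw0, Pi.zero_apply, mul_zero, Finset.sum_const_zero] at this
    simpa using this
  have heig : (M.transpose).mulVec w = lam • w := by
    funext i
    have h3 : D (L (Pi.single i 1)) = lam * w i := by
      have := congrArg (fun (T : (Fin n → ℝ) →L[ℝ] ℂ) => T (Pi.single i 1)) hmain
      simpa using this
    have h4 : D (L (Pi.single i 1)) = ∑ j, (A j i : ℂ) * w j := by
      rw [hLv, hDsum]
      refine Finset.sum_congr rfl fun j _ => ?_
      congr 2
      simp [Matrix.mulVec, dotProduct, Pi.single_apply, Finset.sum_ite_eq]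
    simp only [Matrix.mulVec, dotProduct, Matrix.transpose_apply, Matrix.map_apply,
      Pi.smul_apply, smul_eq_mul, hM]
    rw [← h3, h4]
  -- from eigenvector of Mᵀ to eigenvector of M via determinant
  have hdetT : (M.transpose - lam • 1).det = 0 := by
    rw [← Matrix.exists_mulVec_eq_zero_iff]
    refine ⟨w, hwne, ?_⟩
    rw [Matrix.sub_mulVec, Matrix.smul_mulVec, Matrix.one_mulVec, heig, sub_self]
  have hdet : (M - lam • 1).det = 0 := by
    have : (M - lam • 1).transpose = M.transpose - lam • 1 := by
      rw [Matrix.transpose_sub, Matrix.transpose_smul, Matrix.transpose_one]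
    rw [← Matrix.det_transpose, this, hdetT]
  obtain ⟨v, hvne, hv⟩ := (Matrix.exists_mulVec_eq_zero_iff).2 hdet
  refine ⟨v, hvne, ?_⟩
  rw [Matrix.sub_mulVec, Matrix.smul_mulVec, Matrix.one_mulVec, sub_eq_zero] at hv
  exact hv
end
end
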